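/- Let p : 𝕊 → ℂ be holomorphic on the strip 𝕊 = {w ∈ ℂ : 0 < Re w < 1} with Re p(w) ≥ 0 for all w ∈ 𝕊. Then for any real a < b there exists a constant C₁(a,b,p) > 0 such that ∫ₐᵇ Re p(u + iv) dv ≤ C₁(a,b,p) for all u ∈ (0,1). -/

import Mathlib

open Complex Set MeasureTheory Metric intervalIntegral

private lemma strip_sin_lower (θ : ℝ) (h1 : Real.pi/4 ≤ θ) (h2 : θ ≤ 3*Real.pi/4) :
    Real.sqrt 2 / 2 ≤ Real.sin θ := by
  have hpi := Real.pi_pos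
  rcases le_total θ (Real.pi/2) with h|h
  · have := Real.strictMonoOn_sin.monotoneOn (a := Real.pi/4) (b := θ)
      ⟨by linarith, by linarith⟩ ⟨by linarith, h⟩ h1
    rwa [Real.sin_pi_div_four] at this
  · have h3 : Real.pi/4 ≤ Real.pi - θ := by linarith
    have h4 : Real.pi - θ ≤ Real.pi/2 := by linarith
    have := Real.strictMonoOn_sin.monotoneOn (a := Real.pi/4) (b := Real.pi - θ)
      ⟨by linarith, by linarith⟩ ⟨by linarith, h4⟩ h3
    rwa [Real.sin_pi_div_four, Real.sin_pi_sub] at this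

private lemma strip_ode_comparison (β : ℝ) (hβ : 0 < β) (lam lam1 lam2 : ℝ → ℝ)
    (hd1 : ∀ u ∈ Ioo (0:ℝ) 1, HasDerivAt lam (lam1 u) u)
    (hd2 : ∀ u ∈ Ioo (0:ℝ) 1, HasDerivAt lam1 (lam2 u) u)
    (hnn : ∀ u ∈ Ioo (0:ℝ) 1, 0 ≤ lam u)
    (hineq : ∀ u ∈ Ioo (0:ℝ) 1, lam2 u ≤ β^2 * lam u) :
    ∀ u ∈ Ioo (0:ℝ) 1, lam u ≤ (lam (1/2) + |lam1 (1/2)| / 2) * Real.cosh (β/2) := by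
  intro u hu
  have hKnn : 0 ≤ |lam1 (1/2)| := abs_nonneg _
  have hhalf : (1/2 : ℝ) ∈ Ioo (0:ℝ) 1 := by norm_num
  set Cc : ℝ → ℝ := fun x => Real.cosh (β*(x - 1/2)) with hCcdef
  set Cs : ℝ → ℝ := fun x => Real.sinh (β*(x - 1/2)) * β with hCsdef
  have hlin : ∀ x : ℝ, HasDerivAt (fun x : ℝ => β*(x - 1/2)) β x := by
    intro x
    exact (((hasDerivAt_id x).sub_const (1/2)).const_mul β).congr_deriv (mul_one β)
  have hCc : ∀ x, HasDerivAt Cc (Cs x) x := fun x => (hlin x).cosh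
  have hCs : ∀ x, HasDerivAt Cs (β^2 * Cc x) x := by
    intro x
    have := ((hlin x).sinh).mul_const β
    refine this.congr_deriv ?_
    simp only [hCcdef]
    ring
  have hCcpos : ∀ x, 0 < Cc x := fun x => Real.cosh_pos _
  have hCc1 : ∀ x, 1 ≤ Cc x := fun x => Real.one_le_cosh _
  have hCchalf : Cc (1/2) = 1 := by simp [hCcdef]
  have hCshalf : Cs (1/2) = 0 := by simp [hCsdef]
  set g : ℝ → ℝ := fun x => lam1 x * Cc x - lam x * Cs x with hgdef
  have hg : ∀ x ∈ Ioo (0:ℝ) 1, HasDerivAt g (lam2 x * Cc x - lam x * (β^2 * Cc x)) x := by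
    intro x hx
    have := ((hd2 x hx).mul (hCc x)).sub ((hd1 x hx).mul (hCs x))
    refine this.congr_deriv ?_
    ring
  have hganti : AntitoneOn g (Ioo (0:ℝ) 1) := by
    apply antitoneOn_of_deriv_nonpos (convex_Ioo 0 1)
    · exact fun x hx => (hg x hx).continuousAt.continuousWithinAt
    · intro x hx
      rw [interior_Ioo] at hx
      exact (hg x hx).differentiableAt.differentiableWithinAt
    · intro x hx
      rw [interior_Ioo] at hx
      rw [(hg x hx).deriv]
      have h1 := hineq x hx
      nlinarith [hCcpos x]
  have hghalf : g (1/2) = lam1 (1/2) := by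
    simp only [hgdef]
    rw [hCchalf, hCshalf]
    ring
  set z : ℝ → ℝ := fun x => lam x / Cc x with hzdef
  have hz : ∀ x ∈ Ioo (0:ℝ) 1, HasDerivAt z (g x / Cc x ^ 2) x := by
    intro x hx
    exact (hd1 x hx).div (hCc x) (hCcpos x).ne'
  have hsq : ∀ x : ℝ, (1:ℝ) ≤ Cc x ^ 2 := by
    intro x; nlinarith [hCc1 x]
  have hdivlow : ∀ x ∈ Ioo (0:ℝ) 1, x ≤ 1/2 → -|lam1 (1/2)| ≤ g x / Cc x ^ 2 := by
    intro x hx hxle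
    have hgx : -|lam1 (1/2)| ≤ g x := by
      have h1 := hganti hx hhalf hxle
      rw [hghalf] at h1
      have h2 := neg_abs_le (lam1 (1/2))
      linarith
    rcases le_or_gt 0 (g x) with h|h
    · have : 0 ≤ g x / Cc x ^ 2 := div_nonneg h (by positivity)
      linarith
    · have : g x ≤ g x / Cc x ^ 2 := by
        rw [le_div_iff₀ (by positivity)]
        nlinarith [hsq x]
      linarith
  have hdivhigh : ∀ x ∈ Ioo (0:ℝ) 1, 1/2 ≤ x → g x / Cc x ^ 2 ≤ |lam1 (1/2)| := by
    intro x hx hxge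
    have hgx : g x ≤ |lam1 (1/2)| := by
      have h1 := hganti hhalf hx hxge
      rw [hghalf] at h1
      have h2 := le_abs_self (lam1 (1/2))
      linarith
    rcases le_or_gt (g x) 0 with h|h
    · have : g x / Cc x ^ 2 ≤ 0 := div_nonpos_of_nonpos_of_nonneg h (by positivity)
      linarith
    · have : g x / Cc x ^ 2 ≤ g x := by
        rw [div_le_iff₀ (by positivity)]
        nlinarith [hsq x]
      linarith
  have hzhalf : z (1/2) = lam (1/2) := by
    simp only [hzdef]
    rw [hCchalf, div_one]
  have hzbound : z u ≤ lam (1/2) + |lam1 (1/2)|/2 := by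
    rcases le_total u (1/2) with hle|hge
    · have hsub : Icc u (1/2) ⊆ Ioo (0:ℝ) 1 := fun x hx =>
        ⟨lt_of_lt_of_le hu.1 hx.1, lt_of_le_of_lt hx.2 (by norm_num)⟩
      have hmono : MonotoneOn (fun x => z x + |lam1 (1/2)| * x) (Icc u (1/2)) := by
        apply monotoneOn_of_deriv_nonneg (convex_Icc _ _)
        · intro x hx
          exact ((hz x (hsub hx)).add ((hasDerivAt_id x).const_mul |lam1 (1/2)|)).continuousAt.continuousWithinAt
        · intro x hx
          rw [interior_Icc] at hx
          exact ((hz x (hsub (Ioo_subset_Icc_self hx))).add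
            ((hasDerivAt_id x).const_mul |lam1 (1/2)|)).differentiableAt.differentiableWithinAt
        · intro x hx
          rw [interior_Icc] at hx
          have hx' := hsub (Ioo_subset_Icc_self hx)
          have hD : HasDerivAt (fun x => z x + |lam1 (1/2)| * x) (g x / Cc x ^ 2 + |lam1 (1/2)| * 1) x :=
            (hz x hx').add ((hasDerivAt_id x).const_mul |lam1 (1/2)|)
          rw [hD.deriv]
          have := hdivlow x hx' hx.2.le
          linarith
      have h1 := hmono (left_mem_Icc.2 hle) (right_mem_Icc.2 hle) hle
      have hKu : 0 ≤ |lam1 (1/2)| * u := mul_nonneg hKnn hu.1.le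
      simp only [hzhalf] at h1
      linarith
    · have hsub : Icc (1/2:ℝ) u ⊆ Ioo (0:ℝ) 1 := fun x hx =>
        ⟨lt_of_lt_of_le (by norm_num) hx.1, lt_of_le_of_lt hx.2 hu.2⟩
      have hanti : AntitoneOn (fun x => z x - |lam1 (1/2)| * x) (Icc (1/2:ℝ) u) := by
        apply antitoneOn_of_deriv_nonpos (convex_Icc _ _)
        · intro x hx
          exact ((hz x (hsub hx)).sub ((hasDerivAt_id x).const_mul |lam1 (1/2)|)).continuousAt.continuousWithinAt
        · intro x hx
          rw [interior_Icc] at hx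
          exact ((hz x (hsub (Ioo_subset_Icc_self hx))).sub
            ((hasDerivAt_id x).const_mul |lam1 (1/2)|)).differentiableAt.differentiableWithinAt
        · intro x hx
          rw [interior_Icc] at hx
          have hx' := hsub (Ioo_subset_Icc_self hx)
          have hD : HasDerivAt (fun x => z x - |lam1 (1/2)| * x) (g x / Cc x ^ 2 - |lam1 (1/2)| * 1) x :=
            (hz x hx').sub ((hasDerivAt_id x).const_mul |lam1 (1/2)|)
          rw [hD.deriv]
          have := hdivhigh x hx' hx.1.le
          linarith
      have h1 := hanti (left_mem_Icc.2 hge) (right_mem_Icc.2 hge) hge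
      have hKu : |lam1 (1/2)| * u ≤ |lam1 (1/2)| := by nlinarith [hu.2]
      simp only [hzhalf] at h1
      linarith
  have hCle : Cc u ≤ Real.cosh (β/2) := by
    rw [hCcdef]
    apply Real.cosh_le_cosh.2
    rw [abs_mul, abs_of_pos hβ, abs_of_pos (by positivity : (0:ℝ) < β/2)]
    have h1 : |u - 1/2| ≤ 1/2 := abs_le.2 ⟨by linarith [hu.1], by linarith [hu.2]⟩
    nlinarith
  have hzu : 0 ≤ z u := div_nonneg (hnn u hu) (hCcpos u).le
  have hlz : lam u = z u * Cc u := by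
    simp only [hzdef]
    rw [div_mul_cancel₀ _ (hCcpos u).ne']
  rw [hlz]
  have h0 : 0 ≤ lam (1/2) + |lam1 (1/2)|/2 := by
    have := hnn _ hhalf; linarith
  exact mul_le_mul hzbound hCle (hCcpos u).le h0

/-- Lemma (i): for a holomorphic function `p` with nonnegative real part on the strip
`𝕊 = {w : 0 < Re w < 1}`, the integrals of `Re p` over vertical segments of fixed height
are uniformly bounded. -/
theorem strip_re_integral_bounded
    (p : ℂ → ℂ)
    (hp : DifferentiableOn ℂ p {w : ℂ | 0 < w.re ∧ w.re < 1})
    (hRe : ∀ w ∈ {w : ℂ | 0 < w.re ∧ w.re < 1}, 0 ≤ (p w).re)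
    (a b : ℝ) (hab : a < b) :
    ∃ C : ℝ, 0 < C ∧ ∀ u ∈ Ioo (0:ℝ) 1,
      (∫ v in a..b, (p ((u : ℂ) + (v : ℂ) * Complex.I)).re) ≤ C := by
  set S : Set ℂ := {w : ℂ | 0 < w.re ∧ w.re < 1} with hSdef
  have hS : IsOpen S := by
    rw [hSdef]
    exact (isOpen_Ioo (a := (0:ℝ)) (b := 1)).preimage Complex.continuous_re
  have hre : ∀ (u v : ℝ), ((u:ℂ) + (v:ℂ)*I).re = u := by intro u v; simp
  have hmem : ∀ u ∈ Ioo (0:ℝ) 1, ∀ v : ℝ, ((u:ℂ) + (v:ℂ)*I) ∈ S := by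
    intro u hu v
    rw [hSdef]
    refine ⟨?_, ?_⟩ <;> rw [hre] 
    · exact hu.1
    · exact hu.2
  have hpa : AnalyticOnNhd ℂ p S := hp.analyticOnNhd hS
  have hcont : ∀ (q : ℂ → ℂ), AnalyticOnNhd ℂ q S → ∀ u ∈ Ioo (0:ℝ) 1,
      Continuous fun v : ℝ => q ((u:ℂ) + (v:ℂ)*I) := by
    intro q hq u hu
    exact hq.continuousOn.comp_continuous
      (continuous_const.add (Complex.continuous_ofReal.mul continuous_const))
      (fun v => hmem u hu v)
  have hderiv_horiz : ∀ (q : ℂ → ℂ), AnalyticOnNhd ℂ q S → ∀ (x v : ℝ),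
      ((x:ℂ) + (v:ℂ)*I) ∈ S →
      HasDerivAt (fun y : ℝ => (q ((y:ℂ) + (v:ℂ)*I)).re)
        ((deriv q ((x:ℂ) + (v:ℂ)*I)).re) x := by
    intro q hq x v hw
    have h0 : HasDerivAt q (deriv q ((x:ℂ) + (v:ℂ)*I)) ((x:ℂ) + (v:ℂ)*I) :=
      (hq _ hw).differentiableAt.hasDerivAt
    have h1 : HasDerivAt (fun z : ℂ => q (z + (v:ℂ)*I)) (deriv q ((x:ℂ)+(v:ℂ)*I)) (x:ℂ) := by
      have h := h0.comp (x:ℂ) ((hasDerivAt_id (x:ℂ)).add_const ((v:ℂ)*I)); simp at h; exact h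
    have h2 := h1.comp_ofReal
    have h3 := Complex.reCLM.hasFDerivAt.comp_hasDerivAt x h2
    simp at h3; exact h3
  have hderiv_vert : ∀ (q : ℂ → ℂ), AnalyticOnNhd ℂ q S → ∀ (u v : ℝ),
      ((u:ℂ) + (v:ℂ)*I) ∈ S →
      HasDerivAt (fun y : ℝ => q ((u:ℂ) + (y:ℂ)*I)) (deriv q ((u:ℂ)+(v:ℂ)*I) * I) v := by
    intro q hq u v hw
    have h0 : HasDerivAt q (deriv q ((u:ℂ) + (v:ℂ)*I)) ((u:ℂ) + (v:ℂ)*I) :=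
      (hq _ hw).differentiableAt.hasDerivAt
    have hin : HasDerivAt (fun z : ℂ => (u:ℂ) + z*I) I (v:ℂ) := by
      simpa using ((hasDerivAt_id (v:ℂ)).mul_const I).const_add (u:ℂ)
    have h1 : HasDerivAt (fun z : ℂ => q ((u:ℂ) + z*I)) (deriv q ((u:ℂ)+(v:ℂ)*I) * I) (v:ℂ) := by
      have h := h0.comp (v:ℂ) hin; exact h
    exact h1.comp_ofReal
  -- geometry of the interval
  set L := b - a with hLdef
  have hL : 0 < L := by rw [hLdef]; linarith
  set a' := a - L/2 with ha'def
  set b' := b + L/2 with hb'def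
  have hab' : a' ≤ b' := by rw [ha'def, hb'def]; linarith
  have hba' : b' - a' = 2*L := by rw [ha'def, hb'def]; ring
  set β := Real.pi / (2*L) with hβdef
  have hβ : 0 < β := by
    rw [hβdef]
    exact div_pos Real.pi_pos (by linarith)
  set k : ℝ → ℝ := fun v => Real.sin (β*(v - a')) with hkdef
  set k' : ℝ → ℝ := fun v => Real.cos (β*(v - a')) * β with hk'def
  have hlinv : ∀ v : ℝ, HasDerivAt (fun v : ℝ => β*(v - a')) β v := by
    intro v
    simpa using ((hasDerivAt_id v).sub_const a').const_mul β
  have hkd : ∀ v, HasDerivAt k (k' v) v := fun v => (hlinv v).sin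
  have hk'd : ∀ v, HasDerivAt k' (-(β^2 * k v)) v := by
    intro v
    have := ((hlinv v).cos).mul_const β
    refine this.congr_deriv ?_
    simp only [hkdef]
    ring
  have hkcont : Continuous k := by
    rw [hkdef]; fun_prop
  have hk'cont : Continuous k' := by
    rw [hk'def]; fun_prop
  have hβb : β * (b' - a') = Real.pi := by
    rw [hba', hβdef]
    field_simp
  have hk0a : k a' = 0 := by
    show Real.sin (β*(a' - a')) = 0
    simp
  have hk0b : k b' = 0 := by
    show Real.sin (β*(b' - a')) = 0
    rw [hβb, Real.sin_pi]
  have hk'a : k' a' = β := by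
    show Real.cos (β*(a' - a')) * β = β
    simp
  have hk'b : k' b' = -β := by
    show Real.cos (β*(b' - a')) * β = -β
    rw [hβb, Real.cos_pi]
    ring
  have hknn : ∀ v, a' ≤ v → v ≤ b' → 0 ≤ k v := by
    intro v h1 h2
    show 0 ≤ Real.sin (β*(v - a'))
    apply Real.sin_nonneg_of_nonneg_of_le_pi
    · have : 0 ≤ v - a' := by linarith
      positivity
    · have h3 : β * (v - a') ≤ β * (b' - a') :=
        mul_le_mul_of_nonneg_left (by linarith) hβ.le
      rw [hβb] at h3
      exact h3
  -- the weighted integrals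
  set lam : ℝ → ℝ := fun u => ∫ v in a'..b', (p ((u:ℂ) + (v:ℂ)*I)).re * k v with hlamdef
  set lam1 : ℝ → ℝ := fun u => ∫ v in a'..b', ((deriv p) ((u:ℂ) + (v:ℂ)*I)).re * k v with hlam1def
  set lam2 : ℝ → ℝ := fun u => ∫ v in a'..b', ((deriv (deriv p)) ((u:ℂ) + (v:ℂ)*I)).re * k v with hlam2def
  -- differentiation under the integral sign
  have key : ∀ (q : ℂ → ℂ), AnalyticOnNhd ℂ q S → ∀ u ∈ Ioo (0:ℝ) 1,
      HasDerivAt (fun x : ℝ => ∫ v in a'..b', (q ((x:ℂ) + (v:ℂ)*I)).re * k v)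
        (∫ v in a'..b', ((deriv q) ((u:ℂ) + (v:ℂ)*I)).re * k v) u := by
    intro q hq u hu
    set δ := min u (1-u) / 2 with hδdef
    have hmin : 0 < min u (1-u) := lt_min hu.1 (by linarith [hu.2])
    have hδpos : 0 < δ := by rw [hδdef]; positivity
    have hδ1 : 2*δ ≤ u := by
      have := min_le_left u (1-u)
      rw [hδdef]; linarith
    have hδ2 : 2*δ ≤ 1-u := by
      have := min_le_right u (1-u)
      rw [hδdef]; linarith
    have hball : ∀ x ∈ ball u δ, x ∈ Ioo (0:ℝ) 1 := by
      intro x hx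
      rw [mem_ball, Real.dist_eq] at hx
      have := abs_lt.1 hx
      constructor <;> linarith [this.1, this.2]
    set Kc : Set ℂ := (fun xv : ℝ × ℝ => ((xv.1:ℂ) + (xv.2:ℂ)*I)) '' (Icc (u-δ) (u+δ) ×ˢ Icc a' b') with hKcdef
    have hKcomp : IsCompact Kc := by
      apply (isCompact_Icc.prod isCompact_Icc).image
      fun_prop
    have hKsub : Kc ⊆ S := by
      rw [hKcdef]
      rintro w ⟨⟨x, v⟩, ⟨hx, hv⟩, rfl⟩
      rw [hSdef]
      refine ⟨?_, ?_⟩ <;> rw [hre]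
      · have := hx.1; simp only [mem_Icc] at hx; linarith [hx.1]
      · simp only [mem_Icc] at hx; linarith [hx.2]
    obtain ⟨M, hM⟩ := hKcomp.exists_bound_of_continuousOn ((hq.deriv.continuousOn).mono hKsub)
    have hMnn : 0 ≤ M := by
      have hwmem : ((u:ℂ) + (a':ℂ)*I) ∈ Kc := by
        rw [hKcdef]
        refine ⟨(u, a'), ⟨⟨by linarith, by linarith⟩, ⟨le_refl a', hab'⟩⟩, rfl⟩
      exact le_trans (norm_nonneg _) (hM _ hwmem)
    have main := intervalIntegral.hasDerivAt_integral_of_dominated_loc_of_deriv_le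
      (F := fun (x : ℝ) v => (q ((x:ℂ)+(v:ℂ)*I)).re * k v)
      (F' := fun (x : ℝ) v => ((deriv q) ((x:ℂ)+(v:ℂ)*I)).re * k v)
      (x₀ := u) (a := a') (b := b') (μ := MeasureTheory.volume) (bound := fun _ => M)
      (ball_mem_nhds u hδpos) ?_ ?_ ?_ ?_ ?_ ?_
    · exact main.2
    · filter_upwards [ball_mem_nhds u hδpos] with x hx
      exact ((Complex.continuous_re.comp (hcont q hq x (hball x hx))).mul hkcont).aestronglyMeasurable
    · exact ((Complex.continuous_re.comp (hcont q hq u hu)).mul hkcont).intervalIntegrable a' b'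
    · exact ((Complex.continuous_re.comp (hcont (deriv q) hq.deriv u hu)).mul hkcont).aestronglyMeasurable
    · apply Filter.Eventually.of_forall
      intro v hv x hx
      have hvIcc : v ∈ Icc a' b' := by
        rw [Set.uIoc_of_le hab'] at hv
        exact Ioc_subset_Icc_self hv
      have hxIcc : x ∈ Icc (u-δ) (u+δ) := by
        rw [mem_ball, Real.dist_eq] at hx
        have := abs_lt.1 hx
        constructor <;> linarith [this.1, this.2]
      have hwmem : ((x:ℂ) + (v:ℂ)*I) ∈ Kc := by
        rw [hKcdef]
        exact ⟨(x, v), ⟨hxIcc, hvIcc⟩, rfl⟩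
      have hb1 : |((deriv q) ((x:ℂ)+(v:ℂ)*I)).re| ≤ M := by
        calc |((deriv q) ((x:ℂ)+(v:ℂ)*I)).re| ≤ ‖(deriv q) ((x:ℂ)+(v:ℂ)*I)‖ :=
              Complex.abs_re_le_norm _
          _ ≤ M := by
              exact hM _ hwmem
      have hb2 : |k v| ≤ 1 := by
        show |Real.sin (β*(v - a'))| ≤ 1
        exact Real.abs_sin_le_one _
      rw [Real.norm_eq_abs, abs_mul]
      calc |((deriv q) ((x:ℂ)+(v:ℂ)*I)).re| * |k v| ≤ M * 1 :=
            mul_le_mul hb1 hb2 (abs_nonneg _) hMnn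
        _ = M := mul_one M
    · exact intervalIntegrable_const
    · apply Filter.Eventually.of_forall
      intro v hv x hx
      exact (hderiv_horiz q hq x v (hmem x (hball x hx) v)).mul_const (k v)
  have hd1 : ∀ u ∈ Ioo (0:ℝ) 1, HasDerivAt lam (lam1 u) u := by
    intro u hu
    simp only [hlamdef, hlam1def]
    exact key p hpa u hu
  have hd2 : ∀ u ∈ Ioo (0:ℝ) 1, HasDerivAt lam1 (lam2 u) u := by
    intro u hu
    simp only [hlam1def, hlam2def]
    exact key (deriv p) hpa.deriv u hu
  have hnn : ∀ u ∈ Ioo (0:ℝ) 1, 0 ≤ lam u := by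
    intro u hu
    simp only [hlamdef]
    apply intervalIntegral.integral_nonneg hab'
    intro v hv
    exact mul_nonneg (hRe _ (hmem u hu v)) (hknn v hv.1 hv.2)
  have hineq : ∀ u ∈ Ioo (0:ℝ) 1, lam2 u ≤ β^2 * lam u := by
    intro u hu
    have hφd : ∀ v : ℝ, HasDerivAt (fun y : ℝ => (p ((u:ℂ)+(y:ℂ)*I)).re)
        (-((deriv p ((u:ℂ)+(v:ℂ)*I)).im)) v := by
      intro v
      have h2 := hderiv_vert p hpa u v (hmem u hu v)
      have h3 := Complex.reCLM.hasFDerivAt.comp_hasDerivAt v h2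
      simp [Complex.mul_I_re] at h3; exact h3
    have hηd : ∀ v : ℝ, HasDerivAt (fun y : ℝ => -((deriv p ((u:ℂ)+(y:ℂ)*I)).im))
        (-((deriv (deriv p) ((u:ℂ)+(v:ℂ)*I)).re)) v := by
      intro v
      have h2 := hderiv_vert (deriv p) hpa.deriv u v (hmem u hu v)
      have h3 := (Complex.imCLM.hasFDerivAt.comp_hasDerivAt v h2).neg
      simp [Complex.mul_I_im] at h3; exact h3
    have hφcont : Continuous fun v : ℝ => (p ((u:ℂ)+(v:ℂ)*I)).re :=
      Complex.continuous_re.comp (hcont p hpa u hu)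
    have hηcont : Continuous fun v : ℝ => -((deriv p ((u:ℂ)+(v:ℂ)*I)).im) :=
      (Complex.continuous_im.comp (hcont (deriv p) hpa.deriv u hu)).neg
    have hp2cont : Continuous fun v : ℝ => ((deriv (deriv p)) ((u:ℂ)+(v:ℂ)*I)).re :=
      Complex.continuous_re.comp (hcont _ hpa.deriv.deriv u hu)
    have IBP1 := intervalIntegral.integral_mul_deriv_eq_deriv_mul
      (u := k) (u' := k') (v := fun y : ℝ => -((deriv p ((u:ℂ)+(y:ℂ)*I)).im))
      (v' := fun v => -((deriv (deriv p)) ((u:ℂ)+(v:ℂ)*I)).re)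
      (a := a') (b := b')
      (fun x _ => hkd x) (fun x _ => hηd x)
      (hk'cont.intervalIntegrable a' b') (hp2cont.neg.intervalIntegrable a' b')
    have IBP2 := intervalIntegral.integral_mul_deriv_eq_deriv_mul
      (u := k') (u' := fun v => -(β^2 * k v))
      (v := fun y : ℝ => (p ((u:ℂ)+(y:ℂ)*I)).re)
      (v' := fun y : ℝ => -((deriv p ((u:ℂ)+(y:ℂ)*I)).im))
      (a := a') (b := b')
      (fun x _ => hk'd x) (fun x _ => hφd x)
      (((continuous_const.mul hkcont (M := ℝ)).neg).intervalIntegrable a' b')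
      (hηcont.intervalIntegrable a' b')
    have e1 : lam2 u = - ∫ v in a'..b', k v * (-((deriv (deriv p)) ((u:ℂ)+(v:ℂ)*I)).re) := by
      simp only [hlam2def]
      rw [← intervalIntegral.integral_neg]
      congr 1
      funext v
      ring
    have e3 : (∫ v in a'..b', (-(β^2 * k v)) * (p ((u:ℂ)+(v:ℂ)*I)).re) = -(β^2 * lam u) := by
      have hfun : (fun (v:ℝ) => (-(β^2 * k v)) * (p ((u:ℂ)+(v:ℂ)*I)).re)
          = fun (v:ℝ) => (-(β^2)) * ((p ((u:ℂ)+(v:ℂ)*I)).re * k v) := by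
        funext v; ring
      rw [hfun, intervalIntegral.integral_const_mul]
      simp only [hlamdef]
      ring
    have hφa : 0 ≤ (p ((u:ℂ)+(a':ℂ)*I)).re := hRe _ (hmem u hu a')
    have hφb : 0 ≤ (p ((u:ℂ)+(b':ℂ)*I)).re := hRe _ (hmem u hu b')
    rw [e1, IBP1, hk0a, hk0b, IBP2, hk'a, hk'b, e3]
    have hba2 : 0 ≤ β * (p ((u:ℂ)+(a':ℂ)*I)).re := mul_nonneg hβ.le hφa
    have hbb2 : 0 ≤ β * (p ((u:ℂ)+(b':ℂ)*I)).re := mul_nonneg hβ.le hφb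
    linarith [hba2, hbb2]
  -- conclude via the comparison lemma
  have hmain := strip_ode_comparison β hβ lam lam1 lam2 hd1 hd2 hnn hineq
  have hBnn : 0 ≤ (lam (1/2) + |lam1 (1/2)|/2) * Real.cosh (β/2) := by
    have h1 := hnn (1/2) (by norm_num)
    have h2 : (0:ℝ) ≤ |lam1 (1/2)| := abs_nonneg _
    have h3 := (Real.cosh_pos (β/2)).le
    nlinarith
  refine ⟨Real.sqrt 2 * ((lam (1/2) + |lam1 (1/2)|/2) * Real.cosh (β/2)) + 1, by positivity, ?_⟩
  intro u hu
  have hklow : ∀ v ∈ Icc a b, Real.sqrt 2 / 2 ≤ k v := by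
    intro v hv
    have hva : L/2 ≤ v - a' := by
      rw [ha'def]; simp only [mem_Icc] at hv; linarith [hv.1]
    have hvb : v - a' ≤ 3*L/2 := by
      rw [ha'def, hLdef]; simp only [mem_Icc] at hv; linarith [hv.2]
    have e1 : β * (L/2) = Real.pi/4 := by
      rw [hβdef]; field_simp; ring
    have e2 : β * (3*L/2) = 3*Real.pi/4 := by
      rw [hβdef]; field_simp; ring
    apply strip_sin_lower
    · rw [← e1]
      exact mul_le_mul_of_nonneg_left hva hβ.le
    · rw [← e2]
      exact mul_le_mul_of_nonneg_left hvb hβ.le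
  have hφcont : Continuous fun v : ℝ => (p ((u:ℂ)+(v:ℂ)*I)).re :=
    Complex.continuous_re.comp (hcont p hpa u hu)
  have hφk : Continuous fun v : ℝ => (p ((u:ℂ)+(v:ℂ)*I)).re * k v := hφcont.mul hkcont
  have step1 : (∫ v in a..b, (p ((u:ℂ)+(v:ℂ)*I)).re)
      ≤ Real.sqrt 2 * ∫ v in a..b, (p ((u:ℂ)+(v:ℂ)*I)).re * k v := by
    rw [← intervalIntegral.integral_const_mul]
    apply intervalIntegral.integral_mono_on hab.le (hφcont.intervalIntegrable _ _)
      ((continuous_const.mul hφk).intervalIntegrable _ _)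
    intro v hv
    have h1 := hRe _ (hmem u hu v)
    have h2 := hklow v hv
    have h3 : Real.sqrt 2 * Real.sqrt 2 = 2 := Real.mul_self_sqrt (by norm_num)
    show (p ((u:ℂ)+(v:ℂ)*I)).re ≤ Real.sqrt 2 * ((p ((u:ℂ)+(v:ℂ)*I)).re * k v)
    nlinarith [mul_le_mul_of_nonneg_left h2 h1, Real.sqrt_nonneg 2, mul_le_mul_of_nonneg_left (mul_le_mul_of_nonneg_left h2 h1) (Real.sqrt_nonneg 2)]
  have step2 : (∫ v in a..b, (p ((u:ℂ)+(v:ℂ)*I)).re * k v) ≤ lam u := by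
    have haa' : a' ≤ a := by rw [ha'def]; linarith
    have hbb' : b ≤ b' := by rw [hb'def]; linarith
    have i1 : IntervalIntegrable (fun v => (p ((u:ℂ)+(v:ℂ)*I)).re * k v) MeasureTheory.volume a' a :=
      hφk.intervalIntegrable _ _
    have i2 : IntervalIntegrable (fun v => (p ((u:ℂ)+(v:ℂ)*I)).re * k v) MeasureTheory.volume a b :=
      hφk.intervalIntegrable _ _
    have i3 : IntervalIntegrable (fun v => (p ((u:ℂ)+(v:ℂ)*I)).re * k v) MeasureTheory.volume b b' :=
      hφk.intervalIntegrable _ _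
    have e1 := intervalIntegral.integral_add_adjacent_intervals i2 i3
    have e2 := intervalIntegral.integral_add_adjacent_intervals i1 (i2.trans i3)
    have n1 : 0 ≤ ∫ v in a'..a, (p ((u:ℂ)+(v:ℂ)*I)).re * k v := by
      apply intervalIntegral.integral_nonneg haa'
      intro v hv
      exact mul_nonneg (hRe _ (hmem u hu v)) (hknn v hv.1 (le_trans hv.2 (le_trans hab.le hbb')))
    have n3 : 0 ≤ ∫ v in b..b', (p ((u:ℂ)+(v:ℂ)*I)).re * k v := by
      apply intervalIntegral.integral_nonneg hbb'
      intro v hv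
      exact mul_nonneg (hRe _ (hmem u hu v)) (hknn v (le_trans (le_trans haa' hab.le) hv.1) hv.2)
    have hlameq : lam u = ∫ v in a'..b', (p ((u:ℂ)+(v:ℂ)*I)).re * k v := by simp only [hlamdef]
    rw [hlameq, ← e2, ← e1]
    linarith
  have hlamB := hmain u hu
  calc (∫ v in a..b, (p ((u:ℂ)+(v:ℂ)*I)).re)
      ≤ Real.sqrt 2 * ∫ v in a..b, (p ((u:ℂ)+(v:ℂ)*I)).re * k v := step1
    _ ≤ Real.sqrt 2 * lam u := by
        apply mul_le_mul_of_nonneg_left step2 (Real.sqrt_nonneg 2)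
    _ ≤ Real.sqrt 2 * ((lam (1/2) + |lam1 (1/2)|/2) * Real.cosh (β/2)) := by
        apply mul_le_mul_of_nonneg_left hlamB (Real.sqrt_nonneg 2)
    _ ≤ Real.sqrt 2 * ((lam (1/2) + |lam1 (1/2)|/2) * Real.cosh (β/2)) + 1 := by linarith
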